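/- The gap between the finite-dimensional and infinite-dimensional Bayes-type classifiers is bounded by conditional-expectation differences: ℙ{Γ^{B,d}(X^(d,δ)) ≠ Y} − ℙ{Γ^B(X^(δ)) ≠ Y} ≤ Σ_{k=1}^M 𝔼| 𝔼[(2Y−1)·1{δ=k} | X^(k)] − 𝔼[(2Y−1)·1{δ=k} | X^(d,k)] |. -/

import Mathlib

open MeasureTheory ProbabilityTheory Filter

noncomputable section

/-- The sequence space `ℓ₂` of square-summable real sequences. -/
abbrev ell2 : Type := lp (fun _ : ℕ => ℝ) 2

noncomputable instance : MeasurableSpace ell2 := borel _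
instance : BorelSpace ell2 := ⟨rfl⟩

/-- Coordinate evaluation on `ℓ₂` is continuous. -/
lemma ell2_eval_continuous (j : ℕ) : Continuous (fun x : ell2 => x j) := by
  apply LipschitzWith.continuous (K := 1)
  intro x y
  rw [edist_dist, edist_dist]
  simp only [ENNReal.coe_one, one_mul]
  apply ENNReal.ofReal_le_ofReal
  rw [dist_eq_norm, dist_eq_norm]
  have := lp.norm_apply_le_norm (p := 2) two_ne_zero (x - y) j
  simpa using this

lemma indicator_sub_indicator_eq {Y gd gs : ℝ} (hY : Y = 0 ∨ Y = 1)
    (hgd : gd = 0 ∨ gd = 1) (hgs : gs = 0 ∨ gs = 1) :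
    (if gd ≠ Y then (1:ℝ) else 0) - (if gs ≠ Y then (1:ℝ) else 0)
      = (2 * Y - 1) * (gs - gd) := by
  rcases hY with h | h <;> rcases hgd with h1 | h1 <;> rcases hgs with h2 | h2 <;>
    subst h <;> subst h1 <;> subst h2 <;> norm_num

/-- The gap between the finite-dimensional and infinite-dimensional
Bayes-type classifiers is bounded by the conditional-expectation differences:
`ℙ{Γ^{B,d}(X^(d,δ)) ≠ Y} − ℙ{Γ^B(X^(δ)) ≠ Y}
  ≤ Σ_k 𝔼|𝔼[(2Y−1)1{δ=k} | X^(k)] − 𝔼[(2Y−1)1{δ=k} | X^(d,k)]|`. -/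
theorem finite_dim_bayes_error_gap_bound
    {Ω : Type} [MeasurableSpace Ω] (P : Measure Ω) [IsProbabilityMeasure P]
    (M : ℕ) (hM : 1 ≤ M)
    (Y : Ω → ℝ) (hYmeas : Measurable Y) (hY01 : ∀ ω, Y ω = 0 ∨ Y ω = 1)
    (δ : Ω → Fin M) (hδ : Measurable δ)
    (X : Fin M → Ω → ell2) (hX : ∀ k, Measurable (X k))
    (d : ℕ) (hd : 1 ≤ d)
    (Xd : Fin M → Ω → (Fin d → ℝ))
    (hXd : ∀ k ω, Xd k ω = fun j : Fin d => X k ω (j : ℕ))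
    (φ : Fin M → Ω → ℝ)
    (hφ : ∀ k, φ k =
      P[(fun ω => (2 * Y ω - 1) * (if δ ω = k then (1:ℝ) else 0)) |
        MeasurableSpace.comap (X k) inferInstance])
    (φd : Fin M → Ω → ℝ)
    (hφd : ∀ k, φd k =
      P[(fun ω => (2 * Y ω - 1) * (if δ ω = k then (1:ℝ) else 0)) |
        MeasurableSpace.comap (Xd k) inferInstance]) :
    (P {ω | (∑ k, (if δ ω = k then (1:ℝ) else 0) * (if 0 < φd k ω then (1:ℝ) else 0)) ≠ Y ω}).toReal
        - (P {ω | (∑ k, (if δ ω = k then (1:ℝ) else 0) * (if 0 < φ k ω then (1:ℝ) else 0)) ≠ Y ω}).toReal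
      ≤ ∑ k, ∫ ω, |φ k ω - φd k ω| ∂P := by
  classical
  -- notation
  set f : Fin M → Ω → ℝ :=
    fun k ω => (2 * Y ω - 1) * (if δ ω = k then (1:ℝ) else 0) with hf_def
  set A : Fin M → Set Ω := fun k => {ω | 0 < φ k ω} with hA_def
  set B : Fin M → Set Ω := fun k => {ω | 0 < φd k ω} with hB_def
  -- measurability of the truncated covariates
  have hXdm : ∀ k, Measurable (Xd k) := by
    intro k
    have h : Xd k = fun ω => (fun j : Fin d => X k ω (j : ℕ)) := funext (hXd k)
    rw [h]
    exact measurable_pi_lambda _ fun j =>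
      ((ell2_eval_continuous (j : ℕ)).measurable).comp (hX k)
  have hm : ∀ k, MeasurableSpace.comap (X k) inferInstance ≤ ‹MeasurableSpace Ω› :=
    fun k => (hX k).comap_le
  have hmd : ∀ k, MeasurableSpace.comap (Xd k) inferInstance ≤ ‹MeasurableSpace Ω› :=
    fun k => (hXdm k).comap_le
  -- basic facts about f
  have hfmeas : ∀ k, Measurable (f k) := by
    intro k
    exact ((measurable_const.mul hYmeas).sub measurable_const).mul
      (Measurable.ite (hδ (measurableSet_singleton k)) measurable_const measurable_const)
  have hfint : ∀ k, Integrable (f k) P := by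
    intro k
    refine (integrable_const (1:ℝ)).mono' ((hfmeas k).aestronglyMeasurable) ?_
    filter_upwards with ω
    rcases hY01 ω with h | h <;> simp only [hf_def, h] <;> split <;> norm_num
  -- basic facts about φ, φd
  have hφint : ∀ k, Integrable (φ k) P := fun k => (hφ k) ▸ integrable_condExp
  have hφdint : ∀ k, Integrable (φd k) P := fun k => (hφd k) ▸ integrable_condExp
  have hφmeas : ∀ k, Measurable (φ k) :=
    fun k => (hφ k) ▸ (stronglyMeasurable_condExp.mono (hm k)).measurable
  have hφdmeas : ∀ k, Measurable (φd k) :=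
    fun k => (hφd k) ▸ (stronglyMeasurable_condExp.mono (hmd k)).measurable
  have hA : ∀ k, MeasurableSet[MeasurableSpace.comap (X k) inferInstance] (A k) := by
    intro k
    have : Measurable[MeasurableSpace.comap (X k) inferInstance] (φ k) :=
      (hφ k) ▸ stronglyMeasurable_condExp.measurable
    exact measurableSet_lt measurable_const this
  have hB : ∀ k, MeasurableSet[MeasurableSpace.comap (Xd k) inferInstance] (B k) := by
    intro k
    have : Measurable[MeasurableSpace.comap (Xd k) inferInstance] (φd k) :=
      (hφd k) ▸ stronglyMeasurable_condExp.measurable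
    exact measurableSet_lt measurable_const this
  have hAamb : ∀ k, MeasurableSet (A k) := fun k => hm k _ (hA k)
  have hBamb : ∀ k, MeasurableSet (B k) := fun k => hmd k _ (hB k)
  -- key per-coordinate bound
  have key : ∀ k, (∫ ω in A k, f k ω ∂P) - (∫ ω in B k, f k ω ∂P)
      ≤ ∫ ω, |φ k ω - φd k ω| ∂P := by
    intro k
    have h1 : (∫ ω in A k, f k ω ∂P) = ∫ ω, max (φ k ω) 0 ∂P := by
      rw [← setIntegral_condExp (hm k) (hfint k) (hA k), ← hφ k,
        ← integral_indicator (hAamb k)]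
      refine integral_congr_ae (Filter.Eventually.of_forall fun ω => ?_)
      simp only [Set.indicator_apply, hA_def, Set.mem_setOf_eq]
      split
      · exact (max_eq_left (le_of_lt (by assumption))).symm
      · exact (max_eq_right (not_lt.1 (by assumption))).symm
    have h2 : (∫ ω in B k, f k ω ∂P) = ∫ ω, max (φd k ω) 0 ∂P := by
      rw [← setIntegral_condExp (hmd k) (hfint k) (hB k), ← hφd k,
        ← integral_indicator (hBamb k)]
      refine integral_congr_ae (Filter.Eventually.of_forall fun ω => ?_)
      simp only [Set.indicator_apply, hB_def, Set.mem_setOf_eq]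
      split
      · exact (max_eq_left (le_of_lt (by assumption))).symm
      · exact (max_eq_right (not_lt.1 (by assumption))).symm
    rw [h1, h2, ← integral_sub ((hφint k).pos_part) ((hφdint k).pos_part)]
    refine integral_mono (((hφint k).pos_part).sub ((hφdint k).pos_part))
      (((hφint k).sub (hφdint k)).abs) fun ω => ?_
    exact le_trans (le_abs_self _) (abs_max_sub_max_le_abs _ _ _)
  -- the two error events
  set Ed : Set Ω := {ω | (∑ k, (if δ ω = k then (1:ℝ) else 0) *
      (if 0 < φd k ω then (1:ℝ) else 0)) ≠ Y ω} with hEd_def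
  set Es : Set Ω := {ω | (∑ k, (if δ ω = k then (1:ℝ) else 0) *
      (if 0 < φ k ω then (1:ℝ) else 0)) ≠ Y ω} with hEs_def
  have hgd : Measurable (fun ω => ∑ k, (if δ ω = k then (1:ℝ) else 0) *
      (if 0 < φd k ω then (1:ℝ) else 0)) := by
    refine Finset.measurable_sum _ fun k _ => Measurable.mul ?_ ?_
    · exact Measurable.ite (hδ (measurableSet_singleton k)) measurable_const measurable_const
    · exact Measurable.ite (hBamb k) measurable_const measurable_const
  have hgs : Measurable (fun ω => ∑ k, (if δ ω = k then (1:ℝ) else 0) *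
      (if 0 < φ k ω then (1:ℝ) else 0)) := by
    refine Finset.measurable_sum _ fun k _ => Measurable.mul ?_ ?_
    · exact Measurable.ite (hδ (measurableSet_singleton k)) measurable_const measurable_const
    · exact Measurable.ite (hAamb k) measurable_const measurable_const
  have hEdmeas : MeasurableSet Ed := (measurableSet_eq_fun hgd hYmeas).compl
  have hEsmeas : MeasurableSet Es := (measurableSet_eq_fun hgs hYmeas).compl
  -- pointwise identity
  have hsum : ∀ (ω : Ω) (c : Fin M → ℝ),
      (∑ k, (if δ ω = k then (1:ℝ) else 0) * c k) = c (δ ω) := by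
    intro ω c
    simp [ite_mul]
  have hpt : ∀ ω, Ed.indicator (1 : Ω → ℝ) ω - Es.indicator (1 : Ω → ℝ) ω
      = ∑ k, ((A k).indicator (f k) ω - (B k).indicator (f k) ω) := by
    intro ω
    have hterm : ∀ k, (A k).indicator (f k) ω - (B k).indicator (f k) ω
        = (if δ ω = k then (1:ℝ) else 0) *
          ((2 * Y ω - 1) *
            ((if 0 < φ k ω then (1:ℝ) else 0) - (if 0 < φd k ω then (1:ℝ) else 0))) := by
      intro k
      simp only [Set.indicator_apply, hA_def, hB_def, hf_def, Set.mem_setOf_eq]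
      split_ifs <;> ring
    rw [Finset.sum_congr rfl (fun k _ => hterm k),
      hsum ω (fun k => (2 * Y ω - 1) *
        ((if 0 < φ k ω then (1:ℝ) else 0) - (if 0 < φd k ω then (1:ℝ) else 0)))]
    have hEdm : Ed.indicator (1 : Ω → ℝ) ω
        = if (if 0 < φd (δ ω) ω then (1:ℝ) else 0) ≠ Y ω then (1:ℝ) else 0 := by
      simp only [Set.indicator_apply, hEd_def, Set.mem_setOf_eq, hsum ω, Pi.one_apply]
    have hEsm : Es.indicator (1 : Ω → ℝ) ω
        = if (if 0 < φ (δ ω) ω then (1:ℝ) else 0) ≠ Y ω then (1:ℝ) else 0 := by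
      simp only [Set.indicator_apply, hEs_def, Set.mem_setOf_eq, hsum ω, Pi.one_apply]
    rw [hEdm, hEsm, indicator_sub_indicator_eq (hY01 ω) (by split <;> simp)
      (by split <;> simp)]
  -- expressing the error-probability gap as a sum of set integrals
  have main : (P Ed).toReal - (P Es).toReal
      = ∑ k, ((∫ ω in A k, f k ω ∂P) - (∫ ω in B k, f k ω ∂P)) := by
    have hiEd : Integrable (Ed.indicator (1 : Ω → ℝ)) P :=
      (integrable_const (1:ℝ)).indicator hEdmeas
    have hiEs : Integrable (Es.indicator (1 : Ω → ℝ)) P :=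
      (integrable_const (1:ℝ)).indicator hEsmeas
    have hint1 : ∀ k : Fin M, Integrable (fun a => (A k).indicator (f k) a) P :=
      fun k => (hfint k).indicator (hAamb k)
    have hint2 : ∀ k : Fin M, Integrable (fun a => (B k).indicator (f k) a) P :=
      fun k => (hfint k).indicator (hBamb k)
    have hint : ∀ k : Fin M,
        Integrable (fun a => (A k).indicator (f k) a - (B k).indicator (f k) a) P :=
      fun k => (hint1 k).sub (hint2 k)
    rw [← measureReal_def, ← measureReal_def, ← integral_indicator_one hEdmeas, ← integral_indicator_one hEsmeas,
      ← integral_sub hiEd hiEs,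
      integral_congr_ae (Filter.Eventually.of_forall hpt),
      integral_finset_sum _ (fun k _ => hint k)]
    refine Finset.sum_congr rfl fun k _ => ?_
    rw [integral_sub (hint1 k) (hint2 k),
      integral_indicator (hAamb k), integral_indicator (hBamb k)]
  calc (P Ed).toReal - (P Es).toReal
      = ∑ k, ((∫ ω in A k, f k ω ∂P) - (∫ ω in B k, f k ω ∂P)) := main
    _ ≤ ∑ k, ∫ ω, |φ k ω - φd k ω| ∂P := Finset.sum_le_sum fun k _ => key k
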